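/- Assume that μ is doubling within the ball B0 with doubling constant C_μ, and that the p-Poincaré inequality holds for the ball B0 itself: there are C > 0 and λ ≥ 1 such that ⨍_{B0} |u − u_{B0}| dμ ≤ C r_{B0} (⨍_{λB0} g^p dμ)^{1/p} for all functions u integrable on λB0 and all upper gradients g of u. Let B be a ball with B ⊆ 2B ⊆ B0 and r_B < (2/3) diam B0. Then μ((1/2)B) ≤ θ μ(B), where θ < 1 is a constant depending only on C_μ. -/

import Mathlib

open MeasureTheory Metric Set ENNReal NNReal Filter

noncomputable def erealAbsE (x : EReal) : ℝ≥0∞ :=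
  if x = ⊤ ∨ x = ⊥ then ⊤ else ENNReal.ofReal |x.toReal|

def IsUnitSpeedCurve {Y : Type*} [PseudoMetricSpace Y] (γ : ℝ → Y) (l : ℝ) : Prop :=
  0 < l ∧ ContinuousOn γ (Set.Icc 0 l) ∧
    ∀ a b : ℝ, 0 ≤ a → a ≤ b → b ≤ l →
      eVariationOn γ (Set.Icc a b) = ENNReal.ofReal (b - a)

def IsUpperGradient {Y : Type*} [PseudoMetricSpace Y] [MeasurableSpace Y]
    (g : Y → ℝ≥0∞) (f : Y → EReal) : Prop :=
  Measurable g ∧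
    ∀ (γ : ℝ → Y) (l : ℝ), IsUnitSpeedCurve γ l →
      erealAbsE (f (γ 0) - f (γ l)) ≤ ∫⁻ t in Set.Icc 0 l, g (γ t) ∂volume

def DoublingWithin {Y : Type*} [MetricSpace Y] [MeasurableSpace Y]
    (μ : Measure Y) (x0 : Y) (r0 : ℝ) (C : ℝ≥0) : Prop :=
  ∀ (x : Y) (r : ℝ), 0 < r → ball x r ⊆ ball x0 r0 →
    μ (ball x (2 * r)) ≤ (C : ℝ≥0∞) * μ (ball x r)

def BallsPosFinite {Y : Type*} [MetricSpace Y] [MeasurableSpace Y] (μ : Measure Y) : Prop :=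
  ∀ (x : Y) (r : ℝ), 0 < r → 0 < μ (ball x r) ∧ μ (ball x r) < ⊤

def PoincareBall {Y : Type*} [MetricSpace Y] [MeasurableSpace Y]
    (μ : Measure Y) (q p : ℝ) (x : Y) (r : ℝ) (C lam : ℝ) : Prop :=
  ∀ (u : Y → ℝ) (g : Y → ℝ≥0∞),
    IntegrableOn u (ball x (lam * r)) μ →
    IsUpperGradient g (fun y => (u y : EReal)) →
    ((∫⁻ y in ball x r,
        ENNReal.ofReal |u y - ⨍ z in ball x r, u z ∂μ| ^ q ∂μ) / μ (ball x r)) ^ (1/q)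
      ≤ ENNReal.ofReal (C * r) *
        ((∫⁻ y in ball x (lam * r), g y ^ p ∂μ) / μ (ball x (lam * r))) ^ (1/p)

def PoincareWithin {Y : Type*} [MetricSpace Y] [MeasurableSpace Y]
    (μ : Measure Y) (q p : ℝ) (x0 : Y) (r0 : ℝ) (C lam : ℝ) : Prop :=
  ∀ (x : Y) (r : ℝ), 0 < r → ball x r ⊆ ball x0 r0 → PoincareBall μ q p x r C lam

def GloballyDoublingWith (N : ℕ) (Y : Type*) [PseudoMetricSpace Y] : Prop :=
  ∀ (x : Y) (r : ℝ), 0 < r → ∃ s : Finset Y, s.card ≤ N ∧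
    ball x r ⊆ ⋃ y ∈ s, ball y (r / 2)

def GloballyDoubling (Y : Type*) [PseudoMetricSpace Y] : Prop :=
  ∃ N : ℕ, GloballyDoublingWith N Y

noncomputable def newtonianNorm {Y : Type*} [PseudoMetricSpace Y] [MeasurableSpace Y]
    (μ : Measure Y) (p : ℝ) (f : Y → EReal) : ℝ≥0∞ :=
  ((∫⁻ y, erealAbsE (f y) ^ p ∂μ) +
    ⨅ g ∈ {g : Y → ℝ≥0∞ | IsUpperGradient g f}, ∫⁻ y, g y ^ p ∂μ) ^ (1/p)

noncomputable def newtonianNormOn {X : Type*} [MetricSpace X] [MeasurableSpace X]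
    (μ : Measure X) (p : ℝ) (E : Set X) (f : X → EReal) : ℝ≥0∞ :=
  newtonianNorm (μ.comap (Subtype.val : E → X)) p (fun y : E => f y)

def MemN1p {X : Type*} [MetricSpace X] [MeasurableSpace X]
    (μ : Measure X) (p : ℝ) (f : X → EReal) : Prop :=
  Measurable f ∧ newtonianNorm μ p f < ⊤

def MemN1pLoc {X : Type*} [MetricSpace X] [MeasurableSpace X]
    (μ : Measure X) (p : ℝ) (f : X → EReal) : Prop :=
  Measurable f ∧ ∀ x : X, ∃ (c : X) (r : ℝ), 0 < r ∧ x ∈ ball c r ∧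
    newtonianNormOn μ p (ball c r) f < ⊤

noncomputable def sobolevCapacity {X : Type*} [MetricSpace X] [MeasurableSpace X]
    (μ : Measure X) (p : ℝ) (E : Set X) : ℝ≥0∞ :=
  ⨅ u ∈ {u : X → EReal | Measurable u ∧ ∀ x ∈ E, u x = 1},
    newtonianNorm μ p u ^ p

def ConnectsInWithLength {Y : Type*} [PseudoMetricSpace Y]
    (γ : ℝ → Y) (x y : Y) (A : Set Y) (ℓ : ℝ≥0∞) : Prop :=
  ContinuousOn γ (Set.Icc 0 1) ∧ γ 0 = x ∧ γ 1 = y ∧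
    (∀ t ∈ Set.Icc (0:ℝ) 1, γ t ∈ A) ∧ eVariationOn γ (Set.Icc 0 1) ≤ ℓ

/-- reverse doubling. If `μ` is doubling within `B0` with constant `Cμ` and
the `p`-Poincaré inequality holds for the ball `B0` itself, then for every ball `B` with
`B ⊆ 2B ⊆ B0` and `r_B < (2/3) diam B0` one has `μ((1/2)B) ≤ θ μ(B)` with `θ < 1`
depending only on `Cμ`. -/
theorem reverse_doubling (Cμ : ℝ≥0) :
    ∃ θ : ℝ≥0, θ < 1 ∧
      ∀ (X : Type) [MetricSpace X] [MeasurableSpace X] [BorelSpace X]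
        (μ : Measure X), BallsPosFinite μ →
        ∀ (p : ℝ), 1 ≤ p →
        ∀ (x0 : X) (r0 : ℝ), 0 < r0 → DoublingWithin μ x0 r0 Cμ →
        ∀ (C lam : ℝ), 0 < C → 1 ≤ lam → PoincareBall μ 1 p x0 r0 C lam →
        ∀ (x : X) (r : ℝ), 0 < r → ball x (2 * r) ⊆ ball x0 r0 →
          r < (2/3) * Metric.diam (ball x0 r0) →
          μ (ball x (r/2)) ≤ (θ : ℝ≥0∞) * μ (ball x r) := by

  classical
  have hD1 : (1:ℝ≥0) ≤ Cμ ⊔ 1 := le_sup_right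
  have hDpos : (0:ℝ≥0) < (Cμ ⊔ 1) ^ 5 := pow_pos (lt_of_lt_of_le one_pos hD1) 5
  refine ⟨1 - ((Cμ ⊔ 1) ^ 5)⁻¹, tsub_lt_self one_pos (inv_pos.mpr hDpos), ?_⟩
  intro X _ _ _ μ hBPF p hp x0 r0 hr0 hDbl C lam hC hlam hP x r hr h2B hdiam
  have hp0 : (0:ℝ) < p := lt_of_lt_of_le one_pos hp
  -- a point of B0 far from x
  obtain ⟨w, hw0, hw3⟩ : ∃ w ∈ ball x0 r0, w ∉ ball x (3*r/4) := by
    by_contra hcon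
    push_neg at hcon
    have h1 : Metric.diam (ball x0 r0) ≤ 2 * (3*r/4) :=
      le_trans (Metric.diam_mono (fun y hy => hcon y hy) Metric.isBounded_ball)
        (Metric.diam_ball (by linarith))
    linarith
  have hwx : 3*r/4 ≤ dist w x := not_lt.mp (fun h => hw3 (mem_ball.mpr h))
  -- a point z in the annulus
  obtain ⟨z, hz1, hz2⟩ : ∃ z : X, 9*r/16 ≤ dist x z ∧ dist x z ≤ 11*r/16 := by
    by_contra hno
    push_neg at hno
    set u : X → ℝ := (ball x (5*r/8)).indicator (fun _ => 1) with hu_def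
    have hu_meas : Measurable u := measurable_const.indicator measurableSet_ball
    -- u is 1 inside ball x (5r/8), 0 outside
    have hu_one : ∀ y : X, dist y x < 5*r/8 → u y = 1 := by
      intro y hy
      simp [hu_def, Set.indicator_of_mem (mem_ball.mpr hy)]
    have hu_zero : ∀ y : X, ¬ dist y x < 5*r/8 → u y = 0 := by
      intro y hy
      simp [hu_def, Set.indicator_of_notMem (fun h => hy (mem_ball.mp h))]
    -- zero is an upper gradient of u
    have hug : IsUpperGradient (fun _ : X => (0:ℝ≥0∞)) (fun y => ((u y : ℝ) : EReal)) := by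
      refine ⟨measurable_const, ?_⟩
      intro γ l hγ
      obtain ⟨hl, hcont, -⟩ := hγ
      have hphi : ContinuousOn (fun t => dist (γ t) x) (Set.Icc 0 l) :=
        (continuous_id.dist continuous_const).comp_continuousOn hcont
      have hmem0 : (0:ℝ) ∈ Set.Icc (0:ℝ) l := ⟨le_refl _, hl.le⟩
      have hmeml : l ∈ Set.Icc (0:ℝ) l := ⟨hl.le, le_refl _⟩
      have hkey : u (γ 0) = u (γ l) := by
        by_cases h0 : dist (γ 0) x < 5*r/8 <;> by_cases h1 : dist (γ l) x < 5*r/8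
        · rw [hu_one _ h0, hu_one _ h1]
        · exfalso
          have hmid : (5*r/8) ∈ Set.Icc (dist (γ 0) x) (dist (γ l) x) :=
            ⟨h0.le, not_lt.mp h1⟩
          obtain ⟨t, -, ht0⟩ := intermediate_value_Icc hl.le hphi hmid
          have ht : dist (γ t) x = 5*r/8 := ht0
          exact absurd (hno (γ t) (by rw [dist_comm]; linarith [ht.ge])) (by
            rw [dist_comm x (γ t), ht]; push_neg; linarith)
        · exfalso
          have hmid : (5*r/8) ∈ Set.Icc (dist (γ l) x) (dist (γ 0) x) :=
            ⟨h1.le, not_lt.mp h0⟩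
          obtain ⟨t, -, ht0⟩ := intermediate_value_Icc' hl.le hphi hmid
          have ht : dist (γ t) x = 5*r/8 := ht0
          exact absurd (hno (γ t) (by rw [dist_comm]; linarith [ht.ge])) (by
            rw [dist_comm x (γ t), ht]; push_neg; linarith)
        · rw [hu_zero _ h0, hu_zero _ h1]
      beta_reduce
      rw [hkey]
      have : ((u (γ l) : ℝ) : EReal) - ((u (γ l) : ℝ) : EReal) = ((0:ℝ) : EReal) := by
        rw [← EReal.coe_sub, sub_self]
      rw [this]
      simp [erealAbsE]
    -- u is integrable on the big ball
    have hlamr0 : (0:ℝ) < lam * r0 := by nlinarith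
    have hfin : μ (ball x0 (lam * r0)) < ⊤ := (hBPF x0 (lam*r0) hlamr0).2
    have hint : IntegrableOn u (ball x0 (lam * r0)) μ := by
      rw [hu_def]
      rw [IntegrableOn, integrable_indicator_iff measurableSet_ball]
      refine (integrableOn_const_iff (by simp)).mpr (Or.inr ?_)
      calc (μ.restrict (ball x0 (lam * r0))) (ball x (5*r/8))
          ≤ (μ.restrict (ball x0 (lam * r0))) Set.univ := measure_mono (Set.subset_univ _)
        _ = μ (ball x0 (lam * r0)) := by rw [Measure.restrict_apply_univ]
        _ < ⊤ := hfin
    have hPB := hP u (fun _ => 0) hint hug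
    set a := ⨍ y in ball x0 r0, u y ∂μ with ha
    have h1p : (0:ℝ) < 1/p := by positivity
    simp only [ENNReal.rpow_one, one_div_one, ENNReal.zero_rpow_of_pos hp0,
      lintegral_zero, ENNReal.zero_div, ENNReal.zero_rpow_of_pos h1p, mul_zero,
      le_zero_iff] at hPB
    have hB0fin : μ (ball x0 r0) ≠ ⊤ := ((hBPF x0 r0 hr0).2).ne
    have hI : ∫⁻ y in ball x0 r0, ENNReal.ofReal |u y - a| ∂μ = 0 := by
      rcases ENNReal.div_eq_zero_iff.mp hPB with h | h
      · exact h
      · exact absurd h hB0fin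
    have hmeas : Measurable fun y => ENNReal.ofReal |u y - a| :=
      ((hu_meas.sub measurable_const).abs).ennreal_ofReal
    have hae : ∀ᵐ y ∂(μ.restrict (ball x0 r0)), ENNReal.ofReal |u y - a| = 0 := by
      have := (lintegral_eq_zero_iff hmeas).mp hI
      filter_upwards [this] with y hy
      simpa using hy
    have hNmeas : MeasurableSet {y : X | ¬ ENNReal.ofReal |u y - a| = 0} :=
      (hmeas (measurableSet_singleton 0)).compl
    have hN : μ ({y : X | ¬ ENNReal.ofReal |u y - a| = 0} ∩ ball x0 r0) = 0 := by
      have := ae_iff.mp hae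
      rwa [Measure.restrict_apply hNmeas] at this
    -- a = 1 from the inner ball
    have hball_half : ball x (r/2) ⊆ ball x0 r0 :=
      (ball_subset_ball (by linarith)).trans h2B
    have ha1 : a = 1 := by
      by_contra hne
      have hsub : ball x (r/2) ⊆ {y : X | ¬ ENNReal.ofReal |u y - a| = 0} ∩ ball x0 r0 := by
        intro y hy
        refine ⟨?_, hball_half hy⟩
        have : u y = 1 := hu_one y (by rw [mem_ball] at hy; linarith)
        simp only [Set.mem_setOf_eq, this, ENNReal.ofReal_eq_zero, not_le]
        exact abs_pos.mpr (sub_ne_zero.mpr (fun h => hne h.symm))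
      have : μ (ball x (r/2)) ≤ _ := measure_mono hsub
      rw [hN] at this
      exact absurd (le_antisymm this (zero_le ..)) (hBPF x (r/2) (by linarith)).1.ne'
    -- a = 0 from a ball around w
    have hdwx0 : dist w x0 < r0 := mem_ball.mp hw0
    set δ : ℝ := min (r/8) (r0 - dist w x0) with hδ
    have hδpos : 0 < δ := lt_min (by linarith) (by linarith)
    have ha0 : a = 0 := by
      by_contra hne
      have hsub : ball w δ ⊆ {y : X | ¬ ENNReal.ofReal |u y - a| = 0} ∩ ball x0 r0 := by
        intro y hy
        rw [mem_ball] at hy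
        have hyx : ¬ dist y x < 5*r/8 := by
          have h1 : dist w x ≤ dist w y + dist y x := dist_triangle w y x
          have h2 : dist w y = dist y w := dist_comm w y
          have h3 : δ ≤ r/8 := min_le_left _ _
          push_neg
          linarith
        have hyB0 : y ∈ ball x0 r0 := by
          rw [mem_ball]
          have h1 : dist y x0 ≤ dist y w + dist w x0 := dist_triangle y w x0
          have h3 : δ ≤ r0 - dist w x0 := min_le_right _ _
          linarith
        refine ⟨?_, hyB0⟩
        have : u y = 0 := hu_zero y hyx
        simp only [Set.mem_setOf_eq, this, ENNReal.ofReal_eq_zero, not_le]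
        rw [zero_sub, abs_neg]
        exact abs_pos.mpr hne
      have : μ (ball w δ) ≤ _ := measure_mono hsub
      rw [hN] at this
      exact absurd (le_antisymm this (zero_le ..)) (hBPF w δ hδpos).1.ne'
    exact one_ne_zero (ha1.symm.trans ha0)
  -- quantitative step with doubling
  have hzr : ball z r ⊆ ball x0 r0 := by
    intro y hy
    rw [mem_ball] at hy
    apply h2B
    rw [mem_ball]
    have h1 : dist y x ≤ dist y z + dist z x := dist_triangle y z x
    have h2 : dist z x = dist x z := dist_comm z x
    linarith
  set D : ℝ≥0 := Cμ ⊔ 1 with hD_def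
  have step : ∀ t : ℝ, 0 < t → t ≤ r → μ (ball z (2*t)) ≤ (D:ℝ≥0∞) * μ (ball z t) := by
    intro t ht htr
    refine le_trans (hDbl z t ht ((ball_subset_ball htr).trans hzr)) ?_
    exact mul_le_mul_left (by exact_mod_cast (le_sup_left : Cμ ≤ D)) _
  have c1 := step (r/16) (by linarith) (by linarith)
  have c2 := step (r/8) (by linarith) (by linarith)
  have c3 := step (r/4) (by linarith) (by linarith)
  have c4 := step (r/2) (by linarith) (by linarith)
  have c5 := step r hr le_rfl
  rw [show 2*(r/16) = r/8 by ring] at c1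
  rw [show 2*(r/8) = r/4 by ring] at c2
  rw [show 2*(r/4) = r/2 by ring] at c3
  rw [show 2*(r/2) = r by ring] at c4
  have hchain : μ (ball x r) ≤ (D:ℝ≥0∞)^5 * μ (ball z (r/16)) := by
    have hsub : ball x r ⊆ ball z (2*r) := by
      intro y hy
      rw [mem_ball] at hy ⊢
      have h1 : dist y z ≤ dist y x + dist x z := dist_triangle y x z
      linarith
    calc μ (ball x r) ≤ μ (ball z (2*r)) := measure_mono hsub
      _ ≤ (D:ℝ≥0∞) * μ (ball z r) := c5
      _ ≤ (D:ℝ≥0∞) * ((D:ℝ≥0∞) * μ (ball z (r/2))) := mul_le_mul_right c4 _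
      _ ≤ (D:ℝ≥0∞) * ((D:ℝ≥0∞) * ((D:ℝ≥0∞) * μ (ball z (r/4)))) :=
          mul_le_mul_right (mul_le_mul_right c3 _) _
      _ ≤ (D:ℝ≥0∞) * ((D:ℝ≥0∞) * ((D:ℝ≥0∞) * ((D:ℝ≥0∞) * μ (ball z (r/8))))) :=
          mul_le_mul_right (mul_le_mul_right (mul_le_mul_right c2 _) _) _
      _ ≤ (D:ℝ≥0∞) * ((D:ℝ≥0∞) * ((D:ℝ≥0∞) * ((D:ℝ≥0∞) * ((D:ℝ≥0∞) * μ (ball z (r/16)))))) :=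
          mul_le_mul_right (mul_le_mul_right (mul_le_mul_right (mul_le_mul_right c1 _) _) _) _
      _ = (D:ℝ≥0∞)^5 * μ (ball z (r/16)) := by ring
  have hdisj : Disjoint (ball x (r/2)) (ball z (r/16)) := by
    rw [Set.disjoint_left]
    intro y hy1 hy2
    rw [mem_ball] at hy1 hy2
    have h1 : dist x z ≤ dist x y + dist y z := dist_triangle x y z
    have h2 : dist x y = dist y x := dist_comm x y
    linarith
  have hsum : μ (ball x (r/2)) + μ (ball z (r/16)) ≤ μ (ball x r) := by
    rw [← measure_union hdisj measurableSet_ball]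
    refine measure_mono ?_
    rintro y (hy | hy) <;> rw [mem_ball] at hy ⊢
    · linarith
    · have h1 : dist y x ≤ dist y z + dist z x := dist_triangle y z x
      have h2 : dist z x = dist x z := dist_comm z x
      linarith
  have hMfin : μ (ball x r) ≠ ⊤ := ((hBPF x r hr).2).ne
  have hmfin : μ (ball z (r/16)) ≠ ⊤ :=
    (lt_of_le_of_lt (le_trans le_add_self hsum) (hBPF x r hr).2).ne
  have hDne0 : (D:ℝ≥0∞)^5 ≠ 0 := by
    apply pow_ne_zero
    exact_mod_cast (lt_of_lt_of_le one_pos hD1).ne'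
  have hDnetop : (D:ℝ≥0∞)^5 ≠ ⊤ := by
    apply pow_ne_top
    exact ENNReal.coe_ne_top
  have hm : ((D:ℝ≥0∞)^5)⁻¹ * μ (ball x r) ≤ μ (ball z (r/16)) := by
    calc ((D:ℝ≥0∞)^5)⁻¹ * μ (ball x r)
        ≤ ((D:ℝ≥0∞)^5)⁻¹ * ((D:ℝ≥0∞)^5 * μ (ball z (r/16))) := mul_le_mul_right hchain _
      _ = μ (ball z (r/16)) := by
          rw [← mul_assoc, ENNReal.inv_mul_cancel hDne0 hDnetop, one_mul]
  have hfinal : μ (ball x (r/2)) ≤ μ (ball x r) - ((D:ℝ≥0∞)^5)⁻¹ * μ (ball x r) :=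
    le_trans (ENNReal.le_sub_of_add_le_right hmfin hsum) (tsub_le_tsub_left hm _)
  have hcoe : ((1 - (D ^ 5)⁻¹ : ℝ≥0) : ℝ≥0∞) = 1 - ((D:ℝ≥0∞)^5)⁻¹ := by
    rw [ENNReal.coe_sub, ENNReal.coe_inv (pow_ne_zero 5 (lt_of_lt_of_le one_pos hD1).ne'),
      ENNReal.coe_pow, ENNReal.coe_one]
  rw [hcoe, ENNReal.sub_mul (fun _ _ => hMfin), one_mul]
  exact hfinal
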